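/- arXiv:1410.8287 — 3 statements merged into one kernel-verified Lean document; each statement's English description precedes it below -/
import Mathlib

section
/- Let Δ ⊆ ℝ^d be a reflexive polytope, let 1 ≤ k ≤ 3, and let v₁,…,v_k ∈ Δ ∩ ℤ^d be ℝ-linearly independent points satisfying Cone(v₁,…,v_k) ∩ Δ ∩ ℤ^d = {0, v₁, …, v_k}. Then v₁,…,v_k can be extended to a ℤ-basis of ℤ^d (i.e. the cone Cone(v₁,…,v_k) is unimodular). -/
open Pointwise

/-- The standard pairing `⟨m,n⟩ = ∑ i, mᵢ nᵢ` on `ℝ^d`. -/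
def pairing {d : ℕ} (m n : Fin d → ℝ) : ℝ := ∑ i, m i * n i

/-- A point of `ℝ^d` is a lattice point if all coordinates are integers. -/
def IsLatticePt {d : ℕ} (v : Fin d → ℝ) : Prop := ∀ i, ∃ n : ℤ, v i = (n : ℝ)

/-- The set of lattice points of `ℝ^d`. -/
def latticePts (d : ℕ) : Set (Fin d → ℝ) := {v | IsLatticePt v}

/-- A lattice polytope is the convex hull of finitely many lattice points. -/
def IsLatticePolytope {d : ℕ} (Δ : Set (Fin d → ℝ)) : Prop :=
  ∃ S : Finset (Fin d → ℝ), (S : Set (Fin d → ℝ)) ⊆ latticePts d ∧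
    Δ = convexHull ℝ (S : Set (Fin d → ℝ))

/-- The dual polytope `Δ* = {m : ⟨m,n⟩ ≥ -1 for all n ∈ Δ}`. -/
def dualPolytope {d : ℕ} (Δ : Set (Fin d → ℝ)) : Set (Fin d → ℝ) :=
  {m | ∀ n ∈ Δ, -1 ≤ pairing m n}

/-- A reflexive polytope: a lattice polytope with `0` in its interior
whose dual polytope is again a lattice polytope. -/
def IsReflexive {d : ℕ} (Δ : Set (Fin d → ℝ)) : Prop :=
  IsLatticePolytope Δ ∧ (0 : Fin d → ℝ) ∈ interior Δ ∧ IsLatticePolytope (dualPolytope Δ)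

/-- `Cone(v₁,…,v_k) = {r₁v₁ + ⋯ + r_kv_k : rᵢ ≥ 0}`. -/
def coneOf {d k : ℕ} (v : Fin k → (Fin d → ℝ)) : Set (Fin d → ℝ) :=
  {x | ∃ r : Fin k → ℝ, (∀ i, 0 ≤ r i) ∧ x = ∑ i, r i • v i}

/-- `r·∂Δ`, the frontier (topological boundary) of the dilate `rΔ`. -/
def bdry {d : ℕ} (r : ℝ) (Δ : Set (Fin d → ℝ)) : Set (Fin d → ℝ) := frontier (r • Δ)

/-- The points of `S` lie in a common proper face of `Δ`: there is `u` with
`⟨u,x⟩ ≤ 1` on `Δ` and `⟨u,v⟩ = 1` for all `v ∈ S`. -/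
def InCommonFace {d : ℕ} (Δ : Set (Fin d → ℝ)) (S : Set (Fin d → ℝ)) : Prop :=
  ∃ u : Fin d → ℝ, (∀ x ∈ Δ, pairing u x ≤ 1) ∧ ∀ v ∈ S, pairing u v = 1

/-- Coordinatewise cast of an integer vector to a real vector. -/
def toRealVec {d : ℕ} (n : Fin d → ℤ) : Fin d → ℝ := fun i => (n i : ℝ)

namespace Unimod

variable {d k : ℕ}

lemma pairing_smul_left (c : ℝ) (m n : Fin d → ℝ) : pairing (c • m) n = c * pairing m n := by
  unfold pairing
  rw [Finset.mul_sum]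
  exact Finset.sum_congr rfl fun i _ => by simp [mul_assoc]

lemma pairing_sum_right (u : Fin d → ℝ) (s : Fin k → ℝ) (f : Fin k → Fin d → ℝ) :
    pairing u (∑ i, s i • f i) = ∑ i, s i * pairing u (f i) := by
  unfold pairing
  simp only [Finset.sum_apply, Pi.smul_apply, smul_eq_mul]
  calc ∑ j, u j * ∑ i, s i * f i j
      = ∑ j, ∑ i, s i * (u j * f i j) := Finset.sum_congr rfl fun j _ => by
        rw [Finset.mul_sum]; exact Finset.sum_congr rfl fun i _ => by ring
    _ = ∑ i, ∑ j, s i * (u j * f i j) := Finset.sum_comm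
    _ = ∑ i, s i * ∑ j, u j * f i j := Finset.sum_congr rfl fun i _ => by
        rw [Finset.mul_sum]

lemma isLinearMap_pairing_left (w : Fin d → ℝ) : IsLinearMap ℝ (fun z : Fin d → ℝ => pairing z w) := by
  constructor
  · intro a b; unfold pairing
    rw [← Finset.sum_add_distrib]
    exact Finset.sum_congr rfl fun i _ => by simp [add_mul]
  · intro c a; exact pairing_smul_left c a w

/-- Separation: a lattice point outside a reflexive polytope pairs `≤ -2` with some
lattice point of the dual polytope. -/
lemma exists_lattice_dual_le_neg_two
    {Δ : Set (Fin d → ℝ)} (hΔ : IsReflexive Δ) {w : Fin d → ℝ}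
    (hw : IsLatticePt w) (hwΔ : w ∉ Δ) :
    ∃ p : Fin d → ℝ, IsLatticePt p ∧ p ∈ dualPolytope Δ ∧ pairing p w ≤ -2 := by
  classical
  obtain ⟨S, hSlat, hSeq⟩ := hΔ.1
  have hconv : Convex ℝ Δ := hSeq ▸ convex_convexHull ℝ _
  have hclosed : IsClosed Δ := by
    rw [hSeq]; exact (S.finite_toSet.isCompact_convexHull ℝ).isClosed
  have h0 : (0 : Fin d → ℝ) ∈ Δ := interior_subset hΔ.2.1
  obtain ⟨f, c, hfc, hcf⟩ := geometric_hahn_banach_closed_point hconv hclosed hwΔ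
  have hc0 : 0 < c := by simpa using hfc 0 h0
  set m : Fin d → ℝ := fun i => f (Pi.single i 1) with hm
  have key : ∀ y : Fin d → ℝ, f y = pairing m y := by
    intro y
    have hy : y = ∑ i, y i • (Pi.single i (1 : ℝ) : Fin d → ℝ) := by
      ext j
      simp [Pi.single_apply, Finset.sum_apply, mul_ite, mul_one, mul_zero]
    calc f y = f (∑ i, y i • (Pi.single i (1 : ℝ) : Fin d → ℝ)) := by rw [← hy]
    _ = ∑ i, y i • f (Pi.single i (1 : ℝ) : Fin d → ℝ) := by
        rw [map_sum]
        exact Finset.sum_congr rfl fun i _ => map_smul f _ _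
    _ = pairing m y := by
          unfold pairing
          exact Finset.sum_congr rfl fun i _ => by simp [hm, mul_comm]
  set u : Fin d → ℝ := (-(1 / c)) • m with hu
  have hpair : ∀ y, pairing u y = -(f y / c) := by
    intro y
    rw [hu, pairing_smul_left, ← key]
    ring
  have hudual : u ∈ dualPolytope Δ := by
    intro n hn
    rw [hpair]
    have h1 : f n / c < 1 := (div_lt_one hc0).mpr (hfc n hn)
    linarith
  have huw : pairing u w < -1 := by
    rw [hpair]
    have h1 : 1 < f w / c := (one_lt_div hc0).mpr hcf
    linarith
  -- minimize over lattice generators of the dual polytope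
  obtain ⟨T, hTlat, hTeq⟩ := hΔ.2.2
  have humem : u ∈ convexHull ℝ (T : Set (Fin d → ℝ)) := by rw [← hTeq]; exact hudual
  have hmin : ∃ p ∈ T, pairing p w ≤ pairing u w := by
    by_contra hcon
    push_neg at hcon
    have hsub : (T : Set (Fin d → ℝ)) ⊆ {z | pairing u w < pairing z w} :=
      fun p hp => hcon p hp
    have hcvx : Convex ℝ {z : Fin d → ℝ | pairing u w < pairing z w} :=
      convex_halfSpace_gt (f := fun z : Fin d → ℝ => pairing z w) (isLinearMap_pairing_left w) (pairing u w)
    have := convexHull_min hsub hcvx humem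
    exact lt_irrefl (pairing u w) this
  obtain ⟨p, hpT, hple⟩ := hmin
  have hplat : IsLatticePt p := hTlat hpT
  refine ⟨p, hplat, ?_, ?_⟩
  · rw [hTeq]; exact subset_convexHull ℝ _ hpT
  · -- integrality: pairing p w is an integer < -1, hence ≤ -2
    choose zp hzp using hplat
    choose zw hzw using hw
    have hint : pairing p w = ((∑ i, zp i * zw i : ℤ) : ℝ) := by
      unfold pairing
      push_cast
      exact Finset.sum_congr rfl fun i _ => by rw [hzp i, hzw i]
    have hlt : pairing p w < -1 := lt_of_le_of_lt hple huw
    rw [hint] at hlt ⊢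
    have : (∑ i, zp i * zw i : ℤ) < -1 := by exact_mod_cast hlt
    have h2 : (∑ i, zp i * zw i : ℤ) ≤ -2 := by omega
    exact_mod_cast h2

end Unimod

namespace Part2
variable {d k : ℕ} {Δ : Set (Fin d → ℝ)}

lemma sum_ge_two (hΔ : IsReflexive Δ) (v : Fin k → (Fin d → ℤ))
    (hvΔ : ∀ i, toRealVec (v i) ∈ Δ)
    (hli : LinearIndependent ℝ (fun i => toRealVec (v i)))
    (hcone : coneOf (fun i => toRealVec (v i)) ∩ Δ ∩ latticePts d
      = insert (0 : Fin d → ℝ) (Set.range fun i => toRealVec (v i)))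
    (s : Fin k → ℝ) (hs0 : ∀ i, 0 ≤ s i) (hs1 : ∀ i, s i < 1) (hs : s ≠ 0)
    (hlat : IsLatticePt (∑ i, s i • toRealVec (v i))) :
    2 ≤ ∑ i, s i := by
  classical
  set w := ∑ i, s i • toRealVec (v i) with hw
  have hli' := Fintype.linearIndependent_iff.mp hli
  have hw0 : w ≠ 0 := by
    intro h
    apply hs
    funext i
    exact hli' s (by rw [← h, hw]) i
  have hwne : ∀ i₀, w ≠ toRealVec (v i₀) := by
    intro i₀ h
    have hz : ∑ i, (s i - if i = i₀ then (1:ℝ) else 0) • toRealVec (v i) = 0 := by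
      simp only [sub_smul, ite_smul, one_smul, zero_smul, Finset.sum_sub_distrib]
      rw [Finset.sum_ite_eq' Finset.univ i₀ (fun i => toRealVec (v i))]
      simp [← hw, h]
    have := hli' _ hz i₀
    simp at this
    linarith [hs1 i₀, this]
  have hwΔ : w ∉ Δ := by
    intro hmem
    have hmem' : w ∈ insert (0 : Fin d → ℝ) (Set.range fun i => toRealVec (v i)) := by
      rw [← hcone]
      exact ⟨⟨⟨s, hs0, hw⟩, hmem⟩, hlat⟩
    rcases Set.mem_insert_iff.mp hmem' with h | h
    · exact hw0 h
    · obtain ⟨i₀, h⟩ := h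
      exact hwne i₀ h.symm
  obtain ⟨p, hplat, hpdual, hple⟩ := Unimod.exists_lattice_dual_le_neg_two hΔ hlat hwΔ
  have hexp : pairing p w = ∑ i, s i * pairing p (toRealVec (v i)) := by
    rw [hw]; exact Unimod.pairing_sum_right p s _
  have hbound : ∀ i, -(s i) ≤ s i * pairing p (toRealVec (v i)) := by
    intro i
    have h1 : -1 ≤ pairing p (toRealVec (v i)) := hpdual _ (hvΔ i)
    nlinarith [hs0 i]
  have hlow : -(∑ i, s i) ≤ pairing p w := by
    rw [hexp, ← Finset.sum_neg_distrib]
    exact Finset.sum_le_sum fun i _ => hbound i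
  linarith

lemma frac_zero (hk3 : k ≤ 3) (hΔ : IsReflexive Δ) (v : Fin k → (Fin d → ℤ))
    (hvΔ : ∀ i, toRealVec (v i) ∈ Δ)
    (hli : LinearIndependent ℝ (fun i => toRealVec (v i)))
    (hcone : coneOf (fun i => toRealVec (v i)) ∩ Δ ∩ latticePts d
      = insert (0 : Fin d → ℝ) (Set.range fun i => toRealVec (v i)))
    (t : Fin k → ℝ) (ht0 : ∀ i, 0 ≤ t i) (ht1 : ∀ i, t i < 1)
    (hlat : IsLatticePt (∑ i, t i • toRealVec (v i))) : t = 0 := by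
  classical
  by_contra ht
  have H1 := sum_ge_two hΔ v hvΔ hli hcone t ht0 ht1 ht hlat
  set t' : Fin k → ℝ := fun i => if t i = 0 then 0 else 1 - t i with ht'
  have ht'0 : ∀ i, 0 ≤ t' i := by
    intro i; rw [ht']; dsimp only; split_ifs with h
    · exact le_refl 0
    · linarith [ht1 i]
  have ht'1 : ∀ i, t' i < 1 := by
    intro i; rw [ht']; dsimp only; split_ifs with h
    · norm_num
    · have : 0 < t i := lt_of_le_of_ne (ht0 i) (Ne.symm h)
      linarith
  have htne : t' ≠ 0 := by
    obtain ⟨i, hi⟩ := Function.ne_iff.mp ht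
    intro h
    have h2 := congrFun h i
    rw [ht'] at h2; dsimp only at h2; rw [if_neg (by simpa using hi)] at h2
    simp only [Pi.zero_apply] at h2 hi
    have : t i = 1 := by linarith
    linarith [ht1 i]
  have hlat' : IsLatticePt (∑ i, t' i • toRealVec (v i)) := by
    intro j
    obtain ⟨n, hn⟩ := hlat j
    refine ⟨(∑ i, if t i = 0 then 0 else v i j) - n, ?_⟩
    have h1 : (∑ i, t' i • toRealVec (v i)) j = ∑ i, t' i * (v i j : ℝ) := by
      simp [Finset.sum_apply, toRealVec]
    have hxj : (∑ i, t i • toRealVec (v i)) j = ∑ i, t i * (v i j : ℝ) := by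
      simp [Finset.sum_apply, toRealVec]
    have hn' : (n : ℝ) = ∑ i, t i * (v i j : ℝ) := by rw [← hxj, hn]
    rw [h1]
    push_cast [apply_ite (Int.cast : ℤ → ℝ)]
    rw [hn', ← Finset.sum_sub_distrib]
    refine Finset.sum_congr rfl fun i _ => ?_
    rw [ht']; dsimp only; split_ifs with h
    · simp [h]
    · ring
  have H2 := sum_ge_two hΔ v hvΔ hli hcone t' ht'0 ht'1 htne hlat'
  have hsum : ∑ i, (t i + t' i) ≤ (k : ℝ) := by
    calc ∑ i, (t i + t' i) ≤ ∑ _i : Fin k, (1:ℝ) := by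
          refine Finset.sum_le_sum fun i _ => ?_
          rw [ht']; dsimp only; split_ifs with h
          · simp [h]
          · linarith
      _ = k := by simp
  rw [Finset.sum_add_distrib] at hsum
  have hk : (k : ℝ) ≤ 3 := by exact_mod_cast hk3
  linarith

end Part2

namespace Part3
variable {d k : ℕ} {Δ : Set (Fin d → ℝ)}

noncomputable def castLM (d : ℕ) : (Fin d → ℤ) →ₗ[ℤ] (Fin d → ℝ) where
  toFun := toRealVec
  map_add' := by
    intro a b; funext i; simp only [toRealVec, Pi.add_apply]; push_cast; ring
  map_smul' := by
    intro z a; funext i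
    simp only [toRealVec, Pi.smul_apply, smul_eq_mul, RingHom.id_apply, zsmul_eq_mul]
    push_cast; ring

lemma saturated (hk3 : k ≤ 3) (hΔ : IsReflexive Δ) (v : Fin k → (Fin d → ℤ))
    (hvΔ : ∀ i, toRealVec (v i) ∈ Δ)
    (hli : LinearIndependent ℝ (fun i => toRealVec (v i)))
    (hcone : coneOf (fun i => toRealVec (v i)) ∩ Δ ∩ latticePts d
      = insert (0 : Fin d → ℝ) (Set.range fun i => toRealVec (v i)))
    (x : Fin d → ℤ) (n : ℤ) (hn : n ≠ 0)
    (hx : n • x ∈ Submodule.span ℤ (Set.range v)) :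
    x ∈ Submodule.span ℤ (Set.range v) := by
  classical
  obtain ⟨c, hc⟩ := (Submodule.mem_span_range_iff_exists_fun ℤ).mp hx
  set q : Fin k → ℝ := fun i => (c i : ℝ) / (n : ℝ) with hq
  set m : Fin k → ℤ := fun i => ⌊q i⌋ with hm
  set t : Fin k → ℝ := fun i => q i - m i with htdef
  have hnR : (n : ℝ) ≠ 0 := Int.cast_ne_zero.mpr hn
  have ht0 : ∀ i, 0 ≤ t i := fun i => by
    rw [htdef]; dsimp only; linarith [Int.floor_le (q i)]
  have ht1 : ∀ i, t i < 1 := fun i => by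
    rw [htdef]; dsimp only; linarith [Int.lt_floor_add_one (q i)]
  have hreal : ∀ j, (x j : ℝ) = ∑ i, q i * (v i j : ℝ) := by
    intro j
    have hcj : (∑ i, c i • v i) j = (n • x) j := by rw [hc]
    have h1 : (∑ i, c i • v i) j = ∑ i, c i * v i j := by
      simp [Finset.sum_apply]
    have h2 : (n • x) j = n * x j := by simp
    rw [h1, h2] at hcj
    have hR : (∑ i, (c i : ℝ) * (v i j : ℝ)) = (n : ℝ) * (x j : ℝ) := by
      exact_mod_cast congrArg (Int.cast : ℤ → ℝ) hcj
    have hxj : (x j : ℝ) = (∑ i, (c i : ℝ) * (v i j : ℝ)) / (n : ℝ) := by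
      rw [hR]; field_simp
    rw [hxj, Finset.sum_div]
    exact Finset.sum_congr rfl fun i _ => by rw [hq]; ring
  have hlat : IsLatticePt (∑ i, t i • toRealVec (v i)) := by
    intro j
    refine ⟨x j - ∑ i, m i * v i j, ?_⟩
    have h1 : (∑ i, t i • toRealVec (v i)) j = ∑ i, t i * (v i j : ℝ) := by
      simp [Finset.sum_apply, toRealVec]
    rw [h1]
    push_cast
    rw [hreal j, ← Finset.sum_sub_distrib]
    exact Finset.sum_congr rfl fun i _ => by rw [htdef]; dsimp only; ring
  have ht := Part2.frac_zero hk3 hΔ v hvΔ hli hcone t ht0 ht1 hlat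
  have hqm : ∀ i, q i = (m i : ℝ) := by
    intro i
    have h2 := congrFun ht i
    rw [htdef] at h2; dsimp only at h2
    simp only [Pi.zero_apply] at h2
    linarith
  have hxeq : x = ∑ i, m i • v i := by
    funext j
    have hZ : ((x j : ℤ) : ℝ) = ((∑ i, m i * v i j : ℤ) : ℝ) := by
      push_cast
      rw [hreal j]
      exact Finset.sum_congr rfl fun i _ => by rw [hqm i]
    have := Int.cast_injective hZ
    rw [this]
    simp [Finset.sum_apply]
  rw [hxeq]
  exact Submodule.sum_mem _ fun i _ =>
    Submodule.smul_mem _ _ (Submodule.subset_span ⟨i, rfl⟩)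

end Part3

/-- For a reflexive polytope `Δ ⊆ ℝ^d` and `1 ≤ k ≤ 3` linearly
independent lattice points `v₁,…,v_k ∈ Δ` with `Cone(v₁,…,v_k) ∩ Δ ∩ ℤ^d = {0,v₁,…,v_k}`,
the points `v₁,…,v_k` extend to a ℤ-basis of `ℤ^d`. -/
theorem low_dimensional_cones_unimodular
    (d k : ℕ) (hk1 : 1 ≤ k) (hk3 : k ≤ 3)
    (Δ : Set (Fin d → ℝ)) (hΔ : IsReflexive Δ)
    (v : Fin k → (Fin d → ℤ))
    (hvΔ : ∀ i, toRealVec (v i) ∈ Δ)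
    (hli : LinearIndependent ℝ (fun i => toRealVec (v i)))
    (hcone : coneOf (fun i => toRealVec (v i)) ∩ Δ ∩ latticePts d
      = insert (0 : Fin d → ℝ) (Set.range fun i => toRealVec (v i))) :
    ∃ B : Module.Basis (Fin d) ℤ (Fin d → ℤ), Set.range v ⊆ Set.range ⇑B := by
  classical
  have hZli : LinearIndependent ℤ v := by
    have h1 : LinearIndependent ℤ (fun i => toRealVec (v i)) := by
      refine hli.restrict_scalars ?_
      intro a b h
      have h2 : (a : ℝ) = b := by simpa using h
      exact_mod_cast h2
    exact h1.of_comp (Part3.castLM d)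
  set M := Submodule.span ℤ (Set.range v) with hM
  haveI hNZ : NoZeroSMulDivisors ℤ ((Fin d → ℤ) ⧸ M) := by
    constructor
    intro n xq h
    by_cases hn : n = 0
    · exact Or.inl hn
    · right
      obtain ⟨x, rfl⟩ := Submodule.Quotient.mk_surjective M xq
      rw [← Submodule.Quotient.mk_smul] at h
      have hx : n • x ∈ M := (Submodule.Quotient.mk_eq_zero M).mp h
      exact (Submodule.Quotient.mk_eq_zero M).mpr
        (Part3.saturated hk3 hΔ v hvΔ hli hcone x n hn hx)
  haveI : Module.Free ℤ ((Fin d → ℤ) ⧸ M) := Module.free_of_finite_type_torsion_free'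
  obtain ⟨sec, hsec⟩ := Module.projective_lifting_property M.mkQ LinearMap.id
      (Submodule.mkQ_surjective M)
  let e : (M × ((Fin d → ℤ) ⧸ M)) →ₗ[ℤ] (Fin d → ℤ) := M.subtype.coprod sec
  have hsecq : ∀ qq, M.mkQ (sec qq) = qq := fun qq => LinearMap.congr_fun hsec qq
  have hinj : Function.Injective e := by
    rintro ⟨ma, qa⟩ ⟨mb, qb⟩ hab
    simp only [e, LinearMap.coprod_apply, Submodule.subtype_apply] at hab
    have hq : qa = qb := by
      have h2 := congrArg M.mkQ hab
      simp only [map_add] at h2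
      rw [hsecq qa, hsecq qb] at h2
      have hma : M.mkQ ↑ma = 0 := (Submodule.Quotient.mk_eq_zero M).mpr ma.2
      have hmb : M.mkQ ↑mb = 0 := (Submodule.Quotient.mk_eq_zero M).mpr mb.2
      rw [hma, hmb] at h2
      simpa using h2
    subst hq
    have hm : (ma : Fin d → ℤ) = mb := add_right_cancel hab
    exact Prod.ext (Subtype.ext hm) rfl
  have hsurj : Function.Surjective e := by
    intro x
    have hmem : x - sec (M.mkQ x) ∈ M := by
      have h0 : M.mkQ (x - sec (M.mkQ x)) = 0 := by
        rw [map_sub, hsecq]; exact sub_self _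
      rwa [Submodule.mkQ_apply, Submodule.Quotient.mk_eq_zero] at h0
    exact ⟨(⟨x - sec (M.mkQ x), hmem⟩, M.mkQ x), by
      simp only [e, LinearMap.coprod_apply, Submodule.subtype_apply]
      exact sub_add_cancel x (sec (M.mkQ x))⟩
  let eqv := LinearEquiv.ofBijective e ⟨hinj, hsurj⟩
  let bM : Module.Basis (Fin k) ℤ M := Module.Basis.span hZli
  let bQ := Module.Free.chooseBasis ℤ ((Fin d → ℤ) ⧸ M)
  let B0 := (bM.prod bQ).map eqv
  let idx := B0.indexEquiv (Pi.basisFun ℤ (Fin d))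
  refine ⟨B0.reindex idx, ?_⟩
  rintro _ ⟨i, rfl⟩
  refine ⟨idx (Sum.inl i), ?_⟩
  rw [Module.Basis.reindex_apply, Equiv.symm_apply_apply]
  have hprod : (bM.prod bQ) (Sum.inl i) = (bM i, 0) :=
    Prod.ext (Module.Basis.prod_apply_inl_fst _ _ _) (Module.Basis.prod_apply_inl_snd _ _ _)
  show B0 (Sum.inl i) = v i
  rw [show B0 = (bM.prod bQ).map eqv from rfl, Module.Basis.map_apply, hprod]
  have heqv : eqv (bM i, (0 : (Fin d → ℤ) ⧸ M)) = e (bM i, 0) := rfl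
  rw [heqv]
  simp only [e, LinearMap.coprod_apply, Submodule.subtype_apply, map_zero, add_zero]
  exact congrArg Subtype.val (Module.Basis.span_apply hZli i)
end

section
/- Let Δ ⊆ ℝ^d be a reflexive polytope and let v₁, v₂, v₃, v₄ ∈ Δ ∩ ℤ^d be ℝ-linearly independent points satisfying Cone(v₁,v₂,v₃,v₄) ∩ Δ ∩ ℤ^d = {0, v₁, v₂, v₃, v₄}. If v₁, v₂, v₃, v₄ do not lie in a common proper face of Δ, then v₁, v₂, v₃, v₄ can be extended to a ℤ-basis of ℤ^d (i.e. the cone Cone(v₁,v₂,v₃,v₄) is unimodular). -/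
open Pointwise

section Aux

variable {d : ℕ}

lemma toRealVec_eq_zero_iff {n : Fin d → ℤ} : toRealVec n = 0 ↔ n = 0 := by
  constructor
  · intro h; funext i
    have h2 : ((n i : ℝ)) = 0 := by simpa [toRealVec] using congrFun h i
    exact_mod_cast h2
  · rintro rfl; funext i; simp [toRealVec]

lemma toRealVec_sub (a b : Fin d → ℤ) : toRealVec (a - b) = toRealVec a - toRealVec b := by
  funext i; simp [toRealVec]

lemma toRealVec_sum_zsmul {k : ℕ} (c : Fin k → ℤ) (x : Fin k → Fin d → ℤ) :
    toRealVec (∑ i, c i • x i) = ∑ i, (c i : ℝ) • toRealVec (x i) := by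
  funext j
  simp only [toRealVec, Finset.sum_apply, Pi.smul_apply, smul_eq_mul]
  push_cast
  rfl

lemma isLatticePt_toRealVec (n : Fin d → ℤ) : IsLatticePt (toRealVec n) :=
  fun i => ⟨n i, rfl⟩

lemma pairing_int {p w : Fin d → ℝ} (hp : IsLatticePt p) (hw : IsLatticePt w) :
    ∃ z : ℤ, pairing p w = (z : ℝ) := by
  choose a ha using hp
  choose b hb using hw
  refine ⟨∑ i, a i * b i, ?_⟩
  unfold pairing
  push_cast
  exact Finset.sum_congr rfl fun i _ => by rw [ha, hb]

lemma pairing_sum_smul {k : ℕ} (u : Fin d → ℝ) (c : Fin k → ℝ) (V : Fin k → Fin d → ℝ) :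
    pairing u (∑ i, c i • V i) = ∑ i, c i * pairing u (V i) := by
  unfold pairing
  simp only [Finset.sum_apply, Pi.smul_apply, smul_eq_mul, Finset.mul_sum]
  rw [Finset.sum_comm]
  exact Finset.sum_congr rfl fun i _ => Finset.sum_congr rfl fun j _ => by ring

lemma pairing_neg_left (u x : Fin d → ℝ) : pairing (-u) x = -pairing u x := by
  unfold pairing
  rw [← Finset.sum_neg_distrib]
  exact Finset.sum_congr rfl fun i _ => by simp

lemma isLinearMap_pairing_left (w : Fin d → ℝ) : IsLinearMap ℝ (fun m => pairing m w) := by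
  constructor
  · intro x y; unfold pairing
    rw [← Finset.sum_add_distrib]
    exact Finset.sum_congr rfl fun i _ => by simp [add_mul]
  · intro c x; unfold pairing
    rw [Finset.smul_sum]
    exact Finset.sum_congr rfl fun i _ => by simp [mul_assoc]

/-- Separation: a lattice point not in a reflexive polytope pairs `≤ -2` with some
lattice point of the dual polytope. -/
lemma exists_dual_lattice_pt {Δ : Set (Fin d → ℝ)} (hΔ : IsReflexive Δ)
    (w : Fin d → ℤ) (hw : toRealVec w ∉ Δ) :
    ∃ U : Fin d → ℝ, IsLatticePt U ∧ U ∈ dualPolytope Δ ∧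
      pairing U (toRealVec w) ≤ -2 := by
  obtain ⟨⟨S, _hS, hSΔ⟩, h0, ⟨S', hS', hdual⟩⟩ := hΔ
  have hconv : Convex ℝ Δ := hSΔ ▸ convex_convexHull ℝ _
  have hclosed : IsClosed Δ := hSΔ ▸ (Set.Finite.isCompact_convexHull (𝕜 := ℝ) S.finite_toSet).isClosed
  obtain ⟨f, c, hfw, hfΔ⟩ := geometric_hahn_banach_point_closed hconv hclosed hw
  have h0Δ : (0 : Fin d → ℝ) ∈ Δ := interior_subset h0
  have hc : c < 0 := by simpa using hfΔ 0 h0Δ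
  set m : Fin d → ℝ := fun i => f (fun j => if i = j then 1 else 0) / (-c) with hm
  have hpm : ∀ y : Fin d → ℝ, pairing m y = f y / (-c) := by
    intro y
    conv_rhs => rw [pi_eq_sum_univ y]
    rw [map_sum]
    unfold pairing
    rw [Finset.sum_div]
    refine Finset.sum_congr rfl fun i _ => ?_
    rw [map_smul]
    simp [hm, smul_eq_mul]
    ring
  have hcpos : (0:ℝ) < -c := by linarith
  have hmdual : m ∈ dualPolytope Δ := by
    intro n hn
    rw [hpm]
    rw [le_div_iff₀ hcpos]
    have := hfΔ n hn
    linarith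
  have hmw : pairing m (toRealVec w) < -1 := by
    rw [hpm, div_lt_iff₀ hcpos]
    linarith
  -- find a lattice vertex of the dual with small pairing
  have hexp : ∃ p ∈ (S' : Set (Fin d → ℝ)), pairing p (toRealVec w) < -1 := by
    by_contra hno
    push_neg at hno
    have hsub : (S' : Set (Fin d → ℝ)) ⊆ {x | (-1:ℝ) ≤ pairing x (toRealVec w)} :=
      fun p hp => hno p hp
    have := convexHull_min hsub
      (convex_halfSpace_ge (isLinearMap_pairing_left (toRealVec w)) (-1))
    have hmem : m ∈ convexHull ℝ (S' : Set (Fin d → ℝ)) := hdual ▸ hmdual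
    exact absurd (this hmem) (by simpa using hmw.not_ge)
  obtain ⟨p, hpS, hpw⟩ := hexp
  have hplat : IsLatticePt p := hS' hpS
  obtain ⟨z, hz⟩ := pairing_int hplat (isLatticePt_toRealVec w)
  refine ⟨p, hplat, ?_, ?_⟩
  · rw [hdual]; exact subset_convexHull ℝ _ hpS
  · rw [hz]
    rw [hz] at hpw
    have : z < -1 := by exact_mod_cast hpw
    have : z ≤ -2 := by omega
    exact_mod_cast this

/-- Pure arithmetic contradiction in `Fin 4`. -/
lemma arith_contra (lam mu : Fin 4 → ℝ) (k k' : Fin 4)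
    (h0 : ∀ i, 0 ≤ lam i) (h1 : ∀ i, lam i < 1) (hmu1 : ∀ i, mu i < 1)
    (hmu : ∀ i, mu i ≤ 1 - lam i)
    (hk : 2 ≤ ∑ i ∈ Finset.univ.erase k, lam i)
    (hk' : 2 ≤ ∑ i ∈ Finset.univ.erase k', mu i) : False := by
  rw [Finset.sum_erase_eq_sub (Finset.mem_univ _), Fin.sum_univ_four] at hk hk'
  fin_cases k <;> fin_cases k' <;>
    simp only [Fin.reduceFinMk] at hk hk' <;>
    linarith [h0 0, h0 1, h0 2, h0 3, h1 0, h1 1, h1 2, h1 3,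
      hmu1 0, hmu1 1, hmu1 2, hmu1 3, hmu 0, hmu 1, hmu 2, hmu 3]

end Aux

section Main

variable {d : ℕ} {Δ : Set (Fin d → ℝ)} {v : Fin 4 → (Fin d → ℤ)}

/-- Key step: a nonzero lattice point in the half-open box spanned by the `vᵢ`
has three coordinates summing to at least 2. -/
lemma step_sum (hΔ : IsReflexive Δ)
    (hvΔ : ∀ i, toRealVec (v i) ∈ Δ)
    (hli : LinearIndependent ℝ (fun i => toRealVec (v i)))
    (hcone : coneOf (fun i => toRealVec (v i)) ∩ Δ ∩ latticePts d
      = insert (0 : Fin d → ℝ) (Set.range fun i => toRealVec (v i)))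
    (hface : ¬ InCommonFace Δ (Set.range fun i => toRealVec (v i)))
    (w : Fin d → ℤ) (hw0 : w ≠ 0) (lam : Fin 4 → ℝ)
    (hlam0 : ∀ i, 0 ≤ lam i) (hlam1 : ∀ i, lam i < 1)
    (hrep : toRealVec w = ∑ i, lam i • toRealVec (v i)) :
    ∃ k : Fin 4, 2 ≤ ∑ i ∈ Finset.univ.erase k, lam i := by
  set V : Fin 4 → (Fin d → ℝ) := fun i => toRealVec (v i) with hV
  -- the point is not in Δ
  have hwΔ : toRealVec w ∉ Δ := by
    intro hmem
    have hin : toRealVec w ∈ coneOf V ∩ Δ ∩ latticePts d :=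
      ⟨⟨⟨lam, hlam0, hrep⟩, hmem⟩, isLatticePt_toRealVec w⟩
    rw [hcone] at hin
    rcases hin with h | ⟨i0, h⟩
    · exact hw0 (toRealVec_eq_zero_iff.mp h)
    · -- w = v i0 forces lam i0 = 1
      have hzero : ∑ j, (lam j - if j = i0 then 1 else 0) • V j = 0 := by
        have : ∑ j, (lam j - if j = i0 then 1 else 0) • V j
            = (∑ j, lam j • V j) - ∑ j, (if j = i0 then (1:ℝ) else 0) • V j := by
          rw [← Finset.sum_sub_distrib]
          exact Finset.sum_congr rfl fun j _ => by rw [sub_smul]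
        rw [this, ← hrep, ← h]
        simp [Finset.sum_ite_eq']
      have := Fintype.linearIndependent_iff.mp hli _ hzero i0
      simp at this
      exact absurd this (by linarith [hlam1 i0])
  obtain ⟨U, hUlat, hUdual, hUw⟩ := exists_dual_lattice_pt hΔ w hwΔ
  set a : Fin 4 → ℝ := fun i => pairing U (V i) with ha
  have ha_ge : ∀ i, -1 ≤ a i := fun i => hUdual (V i) (hvΔ i)
  have ha_int : ∀ i, ∃ z : ℤ, a i = (z : ℝ) := fun i =>
    pairing_int hUlat (isLatticePt_toRealVec (v i))
  have hsum : ∑ i, lam i * a i ≤ -2 := by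
    have : pairing U (toRealVec w) = ∑ i, lam i * a i := by
      rw [hrep, pairing_sum_smul]
    linarith [hUw, this ▸ hUw]
  -- some a k is ≥ 0
  have hk : ∃ k, 0 ≤ a k := by
    by_contra hno
    push_neg at hno
    have hallm1 : ∀ i, a i = -1 := by
      intro i
      obtain ⟨z, hz⟩ := ha_int i
      have h1 : (-1:ℝ) ≤ z := hz ▸ ha_ge i
      have h2 : (z:ℝ) < 0 := hz ▸ hno i
      have h1' : (-1:ℤ) ≤ z := by exact_mod_cast h1
      have h2' : z < 0 := by exact_mod_cast h2
      have : z = -1 := by omega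
      rw [hz, this]; norm_num
    exact hface ⟨-U, fun x hx => by
        rw [pairing_neg_left]
        have := hUdual x hx
        linarith,
      by rintro _ ⟨i, rfl⟩
         rw [pairing_neg_left]
         have := hallm1 i
         rw [ha] at this
         simp only [hV] at this ⊢
         rw [this]; norm_num⟩
  obtain ⟨k, hak⟩ := hk
  refine ⟨k, ?_⟩
  have h1 : lam k * a k + ∑ i ∈ Finset.univ.erase k, lam i * a i = ∑ i, lam i * a i :=
    Finset.add_sum_erase Finset.univ (fun i => lam i * a i) (Finset.mem_univ k)
  have h2 : ∀ i ∈ Finset.univ.erase k, -lam i ≤ lam i * a i := by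
    intro i _
    nlinarith [hlam0 i, ha_ge i]
  have h3 : ∑ i ∈ Finset.univ.erase k, (-lam i) ≤ ∑ i ∈ Finset.univ.erase k, lam i * a i :=
    Finset.sum_le_sum h2
  have h4 : 0 ≤ lam k * a k := mul_nonneg (hlam0 k) hak
  rw [Finset.sum_neg_distrib] at h3
  linarith

/-- Main geometric lemma: the half-open box spanned by the `vᵢ` contains no nonzero
lattice point. -/
lemma box_trivial (hΔ : IsReflexive Δ)
    (hvΔ : ∀ i, toRealVec (v i) ∈ Δ)
    (hli : LinearIndependent ℝ (fun i => toRealVec (v i)))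
    (hcone : coneOf (fun i => toRealVec (v i)) ∩ Δ ∩ latticePts d
      = insert (0 : Fin d → ℝ) (Set.range fun i => toRealVec (v i)))
    (hface : ¬ InCommonFace Δ (Set.range fun i => toRealVec (v i)))
    (w : Fin d → ℤ) (lam : Fin 4 → ℝ)
    (hlam0 : ∀ i, 0 ≤ lam i) (hlam1 : ∀ i, lam i < 1)
    (hrep : toRealVec w = ∑ i, lam i • toRealVec (v i)) :
    w = 0 := by
  by_contra hw0
  obtain ⟨k, hk⟩ := step_sum hΔ hvΔ hli hcone hface w hw0 lam hlam0 hlam1 hrep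
  classical
  set mu : Fin 4 → ℝ := fun i => if lam i = 0 then 0 else 1 - lam i with hmu
  have hmu0 : ∀ i, 0 ≤ mu i := by
    intro i; simp only [hmu]
    split
    · exact le_rfl
    · linarith [hlam1 i]
  have hmu1 : ∀ i, mu i < 1 := by
    intro i; simp only [hmu]
    split
    · norm_num
    · rename_i h
      have := hlam0 i
      have : 0 < lam i := lt_of_le_of_ne this (Ne.symm h)
      linarith
  have hmule : ∀ i, mu i ≤ 1 - lam i := by
    intro i; simp only [hmu]
    split
    · rename_i h; rw [h]; norm_num
    · exact le_refl _
  set w' : Fin d → ℤ := (∑ i, (if lam i = 0 then (0:ℤ) else 1) • v i) - w with hw'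
  have hrep' : toRealVec w' = ∑ i, mu i • toRealVec (v i) := by
    rw [hw', toRealVec_sub, toRealVec_sum_zsmul, hrep, ← Finset.sum_sub_distrib]
    refine Finset.sum_congr rfl fun i _ => ?_
    rw [← sub_smul]
    congr 1
    simp only [hmu]
    split <;> simp_all
  have hw'0 : w' ≠ 0 := by
    intro h
    have : toRealVec w' = 0 := toRealVec_eq_zero_iff.mpr h
    rw [hrep'] at this
    have hz := Fintype.linearIndependent_iff.mp hli mu this
    -- some j ≠ k has lam j > 0, so mu j > 0
    have hex : ∃ j ∈ Finset.univ.erase k, 0 < lam j := by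
      by_contra hno
      push_neg at hno
      have : ∑ i ∈ Finset.univ.erase k, lam i ≤ 0 := by
        exact Finset.sum_nonpos fun i hi => hno i hi
      linarith
    obtain ⟨j, _, hj⟩ := hex
    have := hz j
    simp only [hmu] at this
    rw [if_neg (by linarith)] at this
    linarith [hlam1 j]
  obtain ⟨k', hk'⟩ := step_sum hΔ hvΔ hli hcone hface w' hw'0 mu hmu0 hmu1 hrep'
  exact arith_contra lam mu k k' hlam0 hlam1 hmu1 hmule hk hk'

end Main

theorem four_dimensional_cone_unimodular_of_not_in_common_face
    (d : ℕ) (Δ : Set (Fin d → ℝ)) (hΔ : IsReflexive Δ)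
    (v : Fin 4 → (Fin d → ℤ))
    (hvΔ : ∀ i, toRealVec (v i) ∈ Δ)
    (hli : LinearIndependent ℝ (fun i => toRealVec (v i)))
    (hcone : coneOf (fun i => toRealVec (v i)) ∩ Δ ∩ latticePts d
      = insert (0 : Fin d → ℝ) (Set.range fun i => toRealVec (v i)))
    (hface : ¬ InCommonFace Δ (Set.range fun i => toRealVec (v i))) :
    ∃ B : Module.Basis (Fin d) ℤ (Fin d → ℤ), Set.range v ⊆ Set.range ⇑B := by
  classical
  -- ℤ-linear independence of v
  have hliZ : LinearIndependent ℤ v := by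
    rw [Fintype.linearIndependent_iff]
    intro g hg i
    have : toRealVec (∑ j, g j • v j) = 0 := by rw [hg]; exact toRealVec_eq_zero_iff.mpr rfl
    rw [toRealVec_sum_zsmul] at this
    have := Fintype.linearIndependent_iff.mp hli (fun j => (g j : ℝ)) this i
    exact_mod_cast this
  set M : Submodule ℤ (Fin d → ℤ) := Submodule.span ℤ (Set.range v) with hM
  -- saturation of M
  have hsat : ∀ (x : Fin d → ℤ) (n : ℤ), n ≠ 0 → n • x ∈ M → x ∈ M := by
    intro x n hn hnx
    obtain ⟨c, hc⟩ := (Submodule.mem_span_range_iff_exists_fun ℤ).mp hnx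
    have hnR : (n : ℝ) ≠ 0 := Int.cast_ne_zero.mpr hn
    set q : Fin 4 → ℝ := fun i => (c i : ℝ) / n with hq
    have hx : toRealVec x = ∑ i, q i • toRealVec (v i) := by
      have hcast : ∑ i, (c i : ℝ) • toRealVec (v i) = (n : ℝ) • toRealVec x := by
        rw [← toRealVec_sum_zsmul, hc]
        funext j; simp [toRealVec]
      have : (n:ℝ)⁻¹ • ∑ i, (c i : ℝ) • toRealVec (v i) = toRealVec x := by
        rw [hcast, inv_smul_smul₀ hnR]
      rw [← this, Finset.smul_sum]
      refine Finset.sum_congr rfl fun i _ => ?_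
      rw [smul_smul, hq]
      congr 1
      field_simp
    set w : Fin d → ℤ := x - ∑ i, ⌊q i⌋ • v i with hw
    have hrepw : toRealVec w = ∑ i, Int.fract (q i) • toRealVec (v i) := by
      rw [hw, toRealVec_sub, toRealVec_sum_zsmul, hx, ← Finset.sum_sub_distrib]
      refine Finset.sum_congr rfl fun i _ => ?_
      rw [← sub_smul]
      rfl
    have hw0 : w = 0 := box_trivial hΔ hvΔ hli hcone hface w _
      (fun i => Int.fract_nonneg _) (fun i => Int.fract_lt_one _) hrepw
    have : x = ∑ i, ⌊q i⌋ • v i := by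
      have h : x - ∑ i, ⌊q i⌋ • v i = 0 := by rw [← hw]; exact hw0
      exact sub_eq_zero.mp h
    rw [this]
    exact Submodule.sum_mem _ fun i _ =>
      Submodule.smul_mem _ _ (Submodule.subset_span ⟨i, rfl⟩)
  -- the quotient is torsion-free, hence free and projective
  have htf : NoZeroSMulDivisors ℤ ((Fin d → ℤ) ⧸ M) := by
    constructor
    intro n x h
    by_cases hn : n = 0
    · exact Or.inl hn
    · refine Or.inr ?_
      obtain ⟨y, rfl⟩ := Submodule.Quotient.mk_surjective M x
      have : (Submodule.Quotient.mk (n • y) : (Fin d → ℤ) ⧸ M) = 0 := by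
        rw [Submodule.Quotient.mk_smul]; exact h
      have hmem : n • y ∈ M := (Submodule.Quotient.mk_eq_zero M).mp this
      have := hsat y n hn hmem
      exact (Submodule.Quotient.mk_eq_zero M).mpr this
  haveI := htf
  haveI : Module.Free ℤ ((Fin d → ℤ) ⧸ M) := Module.free_of_finite_type_torsion_free'
  obtain ⟨s, hs⟩ := Module.projective_lifting_property M.mkQ (LinearMap.id)
    (Submodule.Quotient.mk_surjective M)
  have hsid : ∀ q : (Fin d → ℤ) ⧸ M, M.mkQ (s q) = q := fun q => by
    have := congrArg (fun f => f q) (congrArg DFunLike.coe hs)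
    simpa using this
  set C : Submodule ℤ (Fin d → ℤ) := LinearMap.range s with hC
  have hcompl : IsCompl M C := by
    constructor
    · rw [Submodule.disjoint_def]
      rintro x hxM ⟨q, rfl⟩
      have h1 : M.mkQ (s q) = 0 := by
        rw [Submodule.mkQ_apply]
        exact (Submodule.Quotient.mk_eq_zero M).mpr hxM
      rw [hsid] at h1
      rw [h1, map_zero]
    · rw [codisjoint_iff, eq_top_iff]
      intro x _
      rw [Submodule.mem_sup]
      refine ⟨x - s (M.mkQ x), ?_, s (M.mkQ x), ⟨_, rfl⟩, by ring⟩
      have h0 : M.mkQ (x - s (M.mkQ x)) = 0 := by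
        rw [map_sub, hsid, sub_self]
      rw [Submodule.mkQ_apply] at h0
      exact (Submodule.Quotient.mk_eq_zero M).mp h0
  have hsinj : Function.Injective s := by
    intro a b hab
    have := congrArg M.mkQ hab
    rwa [hsid, hsid] at this
  set bM : Module.Basis (Fin 4) ℤ M := Module.Basis.span hliZ with hbM
  set eQC : ((Fin d → ℤ) ⧸ M) ≃ₗ[ℤ] C := LinearEquiv.ofInjective s hsinj with heQC
  set bC := (Module.Free.chooseBasis ℤ ((Fin d → ℤ) ⧸ M)).map eQC with hbC
  set B0 : Module.Basis (Fin 4 ⊕ _) ℤ (Fin d → ℤ) :=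
    (bM.prod bC).map (Submodule.prodEquivOfIsCompl M C hcompl) with hB0
  have hB0v : ∀ i, B0 (Sum.inl i) = v i := by
    intro i
    rw [hB0, Module.Basis.map_apply]
    have h1 : ((bM.prod bC) (Sum.inl i)).1 = bM i := Module.Basis.prod_apply_inl_fst _ _ _
    have h2 : ((bM.prod bC) (Sum.inl i)).2 = 0 := Module.Basis.prod_apply_inl_snd _ _ _
    have : (bM.prod bC) (Sum.inl i) = (bM i, 0) := Prod.ext h1 h2
    rw [this]
    have : (Submodule.prodEquivOfIsCompl M C hcompl) (bM i, 0) = (bM i : Fin d → ℤ) := by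
      have := Submodule.coe_prodEquivOfIsCompl M C hcompl
      calc (Submodule.prodEquivOfIsCompl M C hcompl) (bM i, 0)
          = (M.subtype.coprod C.subtype) (bM i, 0) := by rw [← this]; rfl
        _ = (bM i : Fin d → ℤ) := by simp
    rw [this, hbM, Module.Basis.span_apply]
  set e := B0.indexEquiv (Pi.basisFun ℤ (Fin d)) with he
  refine ⟨B0.reindex e, ?_⟩
  rw [Module.Basis.range_reindex]
  rintro _ ⟨i, rfl⟩
  exact ⟨Sum.inl i, hB0v i⟩
end

section
/- Let Δ ⊆ ℝ^d be a reflexive polytope and let v₁, v₂ ∈ Δ ∩ ℤ^d be ℝ-linearly independent points with Cone(v₁,v₂) ∩ Δ ∩ ℤ^d = {0, v₁, v₂}. Then v₁ and v₂ lie in a common proper face of Δ; in particular, the line segment Conv(v₁, v₂) is contained in ∂Δ. -/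
open Pointwise

/-! ### Auxiliary lemmas -/

lemma pairing_linear_left {d : ℕ} (x : Fin d → ℝ) :
    IsLinearMap ℝ (fun m : Fin d → ℝ => pairing m x) := by
  constructor
  · intro a b; simp [pairing, add_mul, Finset.sum_add_distrib]
  · intro c a; simp [pairing, Finset.mul_sum, mul_assoc]

lemma pairing_smul_left {d : ℕ} (c : ℝ) (a x : Fin d → ℝ) :
    pairing (c • a) x = c * pairing a x := (pairing_linear_left x).map_smul c a

lemma pairing_add_right {d : ℕ} (a x y : Fin d → ℝ) :
    pairing a (x + y) = pairing a x + pairing a y := by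
  simp [pairing, mul_add, Finset.sum_add_distrib]

lemma pairing_smul_right {d : ℕ} (c : ℝ) (a x : Fin d → ℝ) :
    pairing a (c • x) = c * pairing a x := by
  simp only [pairing, Pi.smul_apply, smul_eq_mul, Finset.mul_sum]
  exact Finset.sum_congr rfl fun i _ => by ring

lemma pairing_self_pos {d : ℕ} {u : Fin d → ℝ} (hu : u ≠ 0) : 0 < pairing u u := by
  have hnn : ∀ i ∈ Finset.univ, (0:ℝ) ≤ u i * u i := fun i _ => mul_self_nonneg _
  rcases (Finset.sum_nonneg hnn).lt_or_eq with h | h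
  · exact h
  · exfalso; apply hu; funext i
    have := (Finset.sum_eq_zero_iff_of_nonneg hnn).1 h.symm i (Finset.mem_univ i)
    exact mul_self_eq_zero.1 this

/-- Every continuous linear functional on `Fin d → ℝ` is given by pairing with a vector. -/
lemma exists_rep {d : ℕ} (f : (Fin d → ℝ) →L[ℝ] ℝ) :
    ∃ w : Fin d → ℝ, ∀ y, f y = pairing w y := by
  refine ⟨fun i => f (Pi.single i 1), fun y => ?_⟩
  have h1 : y = ∑ i, Pi.single i (y i) := (Finset.univ_sum_single y).symm
  calc f y = f (∑ i, Pi.single i (y i)) := by rw [← h1]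
    _ = ∑ i, f (Pi.single i (y i)) := map_sum f _ _
    _ = ∑ i, f (Pi.single i 1) * y i := by
        refine Finset.sum_congr rfl fun i _ => ?_
        have : Pi.single i (y i) = y i • (Pi.single i (1:ℝ) : Fin d → ℝ) := by
          funext j
          by_cases h : j = i
          · subst h; simp
          · simp [Pi.single_eq_of_ne h]
        rw [this, map_smul, smul_eq_mul, mul_comm]
    _ = pairing (fun i => f (Pi.single i 1)) y := rfl

/-- Bidual criterion: if `x` pairs `≥ -1` with every generator of the dual polytope,
then `x ∈ Δ`. -/
lemma mem_of_dual_pairing {d : ℕ} {Δ : Set (Fin d → ℝ)} (hconv : Convex ℝ Δ)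
    (hcl : IsClosed Δ) (h0 : (0 : Fin d → ℝ) ∈ Δ) {T : Set (Fin d → ℝ)}
    (hdual : dualPolytope Δ = convexHull ℝ T) {x : Fin d → ℝ}
    (hx : ∀ m ∈ T, -1 ≤ pairing m x) : x ∈ Δ := by
  by_contra hxΔ
  obtain ⟨f, u, hfa, hux⟩ := geometric_hahn_banach_closed_point hconv hcl hxΔ
  obtain ⟨w, hw⟩ := exists_rep f
  have hu0 : 0 < u := by
    have := hfa 0 h0
    rwa [map_zero] at this
  set m : Fin d → ℝ := (-(1/u)) • w with hm
  have hmΔ : m ∈ dualPolytope Δ := by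
    intro n hn
    have h1 : pairing m n = -(1/u) * (f n) := by rw [hm, pairing_smul_left, hw]
    rw [h1]
    have := hfa n hn
    rw [neg_mul, neg_le_neg_iff, one_div]
    rw [inv_mul_le_iff₀ hu0]
    linarith
  have hmx : pairing m x < -1 := by
    have h1 : pairing m x = -(1/u) * (f x) := by rw [hm, pairing_smul_left, hw]
    rw [h1, neg_mul, neg_lt_neg_iff, one_div]
    rw [lt_inv_mul_iff₀ hu0]
    linarith
  have hconvset : Convex ℝ {m' : Fin d → ℝ | -1 ≤ pairing m' x} :=
    convex_halfSpace_ge (pairing_linear_left x) (-1)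
  have hsub : dualPolytope Δ ⊆ {m' : Fin d → ℝ | -1 ≤ pairing m' x} := by
    rw [hdual]
    exact convexHull_min hx hconvset
  exact absurd (hsub hmΔ) (by simpa using hmx)

/-- Pairing of two lattice points is an integer. -/
lemma pairing_int_s8 {d : ℕ} {m v : Fin d → ℝ} (hm : IsLatticePt m) (hv : IsLatticePt v) :
    ∃ z : ℤ, pairing m v = (z : ℝ) := by
  choose a ha using hm
  choose b hb using hv
  refine ⟨∑ i, a i * b i, ?_⟩
  rw [pairing]
  push_cast
  exact Finset.sum_congr rfl fun i _ => by rw [ha i, hb i]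

/-- If `v₁, v₂` are linearly independent lattice points of a reflexive
polytope `Δ ⊆ ℝ^d` with `Cone(v₁,v₂) ∩ Δ ∩ ℤ^d = {0, v₁, v₂}`, then `v₁` and `v₂` lie
in a common proper face of `Δ`; in particular the segment `Conv(v₁,v₂)` lies in `∂Δ`. -/
theorem edge_of_maximal_fan_in_boundary
    (d : ℕ) (Δ : Set (Fin d → ℝ)) (hΔ : IsReflexive Δ)
    (v₁ v₂ : Fin d → ℝ)
    (hvΔ : v₁ ∈ Δ ∧ v₂ ∈ Δ) (hvL : IsLatticePt v₁ ∧ IsLatticePt v₂)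
    (hli : LinearIndependent ℝ ![v₁, v₂])
    (hcone : coneOf ![v₁, v₂] ∩ Δ ∩ latticePts d = ({0, v₁, v₂} : Set (Fin d → ℝ))) :
    InCommonFace Δ {v₁, v₂} ∧ segment ℝ v₁ v₂ ⊆ frontier Δ := by
  obtain ⟨hv1Δ, hv2Δ⟩ := hvΔ
  obtain ⟨hv1L, hv2L⟩ := hvL
  obtain ⟨⟨S, _hS, hΔS⟩, h0int, ⟨T, hT, hTd⟩⟩ := hΔ
  have hconv : Convex ℝ Δ := hΔS ▸ convex_convexHull ℝ _
  have hcl : IsClosed Δ := hΔS ▸ (S.finite_toSet.isCompact_convexHull (𝕜 := ℝ)).isClosed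
  have h0Δ : (0 : Fin d → ℝ) ∈ Δ := interior_subset h0int
  rw [LinearIndependent.pair_iff] at hli
  have hface : InCommonFace Δ {v₁, v₂} := by
    by_contra hnf
    have hsum : v₁ + v₂ ∈ Δ := by
      apply mem_of_dual_pairing hconv hcl h0Δ hTd
      intro m hmT
      have hmdual : m ∈ dualPolytope Δ := hTd ▸ subset_convexHull ℝ _ hmT
      have hm1 : -1 ≤ pairing m v₁ := hmdual v₁ hv1Δ
      have hm2 : -1 ≤ pairing m v₂ := hmdual v₂ hv2Δ
      have hmL : IsLatticePt m := hT hmT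
      obtain ⟨z₁, hz₁⟩ := pairing_int_s8 hmL hv1L
      obtain ⟨z₂, hz₂⟩ := pairing_int_s8 hmL hv2L
      have hnot : ¬(pairing m v₁ = -1 ∧ pairing m v₂ = -1) := by
        rintro ⟨e1, e2⟩
        apply hnf
        refine ⟨-m, fun x hxΔ => ?_, ?_⟩
        · have h1 : pairing (-m) x = -(1 : ℝ) * pairing m x := by
            rw [← pairing_smul_left]; norm_num
          have := hmdual x hxΔ
          rw [h1]; linarith
        · rintro v (rfl | rfl)
          · have h1 : pairing (-m) v = -(1 : ℝ) * pairing m v := by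
              rw [← pairing_smul_left]; norm_num
            rw [h1, e1]; ring
          · have h1 : pairing (-m) v = -(1 : ℝ) * pairing m v := by
              rw [← pairing_smul_left]; norm_num
            rw [h1, e2]; ring
      rw [pairing_add_right]
      have hz1' : (-1 : ℤ) ≤ z₁ := by exact_mod_cast hz₁ ▸ hm1
      have hz2' : (-1 : ℤ) ≤ z₂ := by exact_mod_cast hz₂ ▸ hm2
      have : ¬(z₁ = -1 ∧ z₂ = -1) := by
        rintro ⟨rfl, rfl⟩
        exact hnot ⟨by rw [hz₁]; norm_num, by rw [hz₂]; norm_num⟩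
      have hge : (-1 : ℤ) ≤ z₁ + z₂ := by omega
      rw [hz₁, hz₂]
      exact_mod_cast hge
    have hsumCone : v₁ + v₂ ∈ coneOf ![v₁, v₂] := by
      refine ⟨![1, 1], fun i => ?_, ?_⟩
      · fin_cases i <;> norm_num
      · simp [Fin.sum_univ_two]
    have hsumL : v₁ + v₂ ∈ latticePts d := by
      intro i
      obtain ⟨a, ha⟩ := hv1L i
      obtain ⟨b, hb⟩ := hv2L i
      exact ⟨a + b, by push_cast [Pi.add_apply]; rw [ha, hb]⟩
    have hmem : v₁ + v₂ ∈ ({0, v₁, v₂} : Set (Fin d → ℝ)) :=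
      hcone ▸ ⟨⟨hsumCone, hsum⟩, hsumL⟩
    rcases hmem with h | h | h
    · have := hli 1 1 (by rw [one_smul, one_smul]; exact h)
      norm_num at this
    · have hv2 : v₂ = 0 := by
        have := congrArg (fun y => y - v₁) h
        simpa [add_sub_cancel_left] using this
      have := hli 0 1 (by rw [zero_smul, one_smul, zero_add, hv2])
      norm_num at this
    · have hv1 : v₁ = 0 := by
        have := congrArg (fun y => y - v₂) h
        simpa [add_sub_cancel_right] using this
      have := hli 1 0 (by rw [zero_smul, one_smul, add_zero, hv1])
      norm_num at this
  refine ⟨hface, ?_⟩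
  obtain ⟨u, huΔ, huv⟩ := hface
  have hu1 : pairing u v₁ = 1 := huv v₁ (by left; rfl)
  have hune : u ≠ 0 := by
    rintro rfl
    rw [show pairing (0 : Fin d → ℝ) v₁ = 0 by simp [pairing]] at hu1
    norm_num at hu1
  intro x hx
  obtain ⟨a, b, ha, hb, hab, rfl⟩ := hx
  have hxΔ : a • v₁ + b • v₂ ∈ Δ := hconv hv1Δ hv2Δ ha hb hab
  have hux : pairing u (a • v₁ + b • v₂) = 1 := by
    rw [pairing_add_right, pairing_smul_right, pairing_smul_right, hu1,
      huv v₂ (by right; rfl)]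
    linarith
  rw [frontier, Set.mem_diff]
  refine ⟨subset_closure hxΔ, fun hint => ?_⟩
  obtain ⟨ε, hε, hball⟩ := Metric.isOpen_iff.1 isOpen_interior _ hint
  have hpu : 0 < pairing u u := pairing_self_pos hune
  set δ : ℝ := ε / (2 * (‖u‖ + 1)) with hδ
  have hδ0 : 0 < δ := by
    apply div_pos hε
    positivity
  have hy : (a • v₁ + b • v₂) + δ • u ∈ Metric.ball (a • v₁ + b • v₂) ε := by
    rw [Metric.mem_ball, dist_eq_norm, add_sub_cancel_left, norm_smul,
      Real.norm_eq_abs, abs_of_pos hδ0]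
    calc δ * ‖u‖ < δ * (2 * (‖u‖ + 1)) := by
          apply mul_lt_mul_of_pos_left _ hδ0
          nlinarith [norm_nonneg u]
      _ = ε := by
          rw [hδ]
          field_simp
  have hyΔ : (a • v₁ + b • v₂) + δ • u ∈ Δ := interior_subset (hball hy)
  have := huΔ _ hyΔ
  rw [pairing_add_right, hux, pairing_smul_right] at this
  nlinarith
end
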